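/- For every positive integer N, (−1)^{N(N−1)/2} · (1/[(2N−1)!]^N) · det[ (3N−2−i−j)! / (N−1−i−j)! ]_{i,j=0,…,N−1} = 1, where the entries with negative factorial argument in the denominator are interpreted via 1/(m)! = 0 for m < 0. Equivalently, taking N = 0 in the general determinant formula: F_0(0,k) = (−1)^{k(k−1)/2}/[(2k−1)!]^k · det[(3k−2−i−j)!/(k−1−i−j)!]_{i,j=0,…,k−1} = 1. -/

import Mathlib

open Finset Equiv

lemma sign_revPerm_aux : ∀ k : ℕ,
    Equiv.Perm.sign (Fin.revPerm : Equiv.Perm (Fin k)) = (-1 : ℤˣ) ^ (k * (k - 1) / 2)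
  | 0 => by
    rw [show (Fin.revPerm : Equiv.Perm (Fin 0)) = 1 from Subsingleton.elim _ _]
    simp
  | 1 => by
    rw [show (Fin.revPerm : Equiv.Perm (Fin 1)) = 1 from Subsingleton.elim _ _]
    simp
  | (m + 2) => by
    have hd : (Fin.revPerm : Equiv.Perm (Fin (m + 2))) =
        Equiv.Perm.decomposeFin.symm
          (Fin.last (m + 1), Fin.revPerm * finRotate (m + 1)) := by
      ext x
      refine Fin.cases ?_ (fun y => ?_) x
      · simp
      · rw [Equiv.Perm.decomposeFin_symm_apply_succ, Equiv.Perm.mul_apply,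
          finRotate_succ_apply]
        by_cases hy : y = Fin.last m
        · subst hy
          rw [Fin.last_add_one]
          simp [Equiv.swap_apply_right, Fin.succ_last]
        · have h1 : (y + 1).val = y.val + 1 := Fin.val_add_one_of_lt (Fin.lt_last_iff_ne_last.mpr hy)
          have h2 : y.val < m := by
            have := Fin.lt_last_iff_ne_last.mpr hy
            simpa [Fin.lt_iff_val_lt_val] using this
          rw [Equiv.swap_apply_of_ne_of_ne (Fin.succ_ne_zero _) ?hne]
          case hne =>
            intro hcon
            apply hy
            have : (Fin.revPerm (y+1)).val + 1 = m + 1 := by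
              rw [← Fin.val_succ, hcon]; simp
            simp only [Fin.revPerm_apply, Fin.val_rev, h1] at this
            omega
          simp only [Fin.revPerm_apply, Fin.val_rev, Fin.val_succ, h1]
          omega
    rw [hd, Equiv.Perm.decomposeFin.symm_sign, if_neg (Fin.last_pos).ne',
      map_mul, sign_revPerm_aux (m + 1), sign_finRotate]
    have h0 : (m + 2) * (m + 2 - 1) = (m + 1) * (m + 1 - 1) + 2 * (m + 1) := by
      show (m + 2) * (m + 1) = (m + 1) * m + 2 * (m + 1)
      ring
    have he : (m + 2) * (m + 2 - 1) / 2 = (m + 1) * (m + 1 - 1) / 2 + (m + 1) := by omega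
    rw [he, pow_add, pow_succ]
    simp [mul_comm, mul_left_comm, mul_assoc]

private lemma prod_range_add_eq_ascFactorial (c : ℕ) :
    ∀ K : ℕ, ∏ m ∈ Finset.range K, (c + m) = c.ascFactorial K
  | 0 => by simp
  | K + 1 => by
    rw [Finset.prod_range_succ, prod_range_add_eq_ascFactorial c K,
      Nat.ascFactorial_succ, mul_comm]

/-- For every positive integer `k`,
`(−1)^{k(k−1)/2} · (1/[(2k−1)!]^k) · det[(3k−2−i−j)!/(k−1−i−j)!]_{i,j=0,…,k−1} = 1`,
where the entry `(3k−2−i−j)!/(k−1−i−j)!` denotes the falling-factorial product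
`(k−i−j)(k+1−i−j)⋯(3k−2−i−j)` (which vanishes when `k−1−i−j < 0`). -/
theorem det_falling_factorial_eq_one (k : ℕ) (hk : 0 < k) :
    ((-1 : ℚ)) ^ (k * (k - 1) / 2) / (((2 * k - 1).factorial : ℚ)) ^ k *
      Matrix.det (fun i j : Fin k =>
        ∏ m ∈ Finset.range (2 * k - 1), ((k : ℚ) - (i : ℕ) - (j : ℕ) + m)) = 1 := by
  set K := 2 * k - 1 with hK
  set A : Matrix (Fin k) (Fin k) ℚ :=
    Matrix.of fun i a : Fin k => ((k - 1 - (i : ℕ)).choose (a : ℕ) : ℚ) with hA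
  set B : Matrix (Fin k) (Fin k) ℚ :=
    Matrix.of fun a j : Fin k => ((K - (j : ℕ)).choose (K - (a : ℕ)) : ℚ) with hB
  have hM : (fun i j : Fin k =>
        ∏ m ∈ Finset.range K, ((k : ℚ) - (i : ℕ) - (j : ℕ) + m))
      = ((K.factorial : ℚ) • (A * B) : Matrix (Fin k) (Fin k) ℚ) := by
    funext i j
    have hi : (i : ℕ) < k := i.isLt
    have hj : (j : ℕ) < k := j.isLt
    have hsum : ∑ a : Fin k, A i a * B a j
        = (((k - 1 - (i : ℕ)) + (K - (j : ℕ))).choose K : ℚ) := by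
      have h1 : ∑ a : Fin k, A i a * B a j
          = ∑ a ∈ Finset.range k,
              (((k - 1 - (i : ℕ)).choose a * (K - (j : ℕ)).choose (K - a) : ℕ) : ℚ) := by
        rw [← Fin.sum_univ_eq_sum_range]
        simp [hA, hB]
      rw [h1, ← Nat.cast_sum]
      congr 1
      rw [Nat.add_choose_eq, Finset.Nat.sum_antidiagonal_eq_sum_range_succ_mk]
      refine Finset.sum_subset (Finset.range_subset_range.mpr (by omega)) ?_
      intro x hx hnx
      rw [Nat.choose_eq_zero_of_lt (by simp at hnx ⊢; omega), zero_mul]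
    have hprod : ∏ m ∈ Finset.range K, ((k : ℚ) - (i : ℕ) - (j : ℕ) + m)
        = (((k - 1 - (i : ℕ)) + (K - (j : ℕ))).descFactorial K : ℚ) := by
      rcases le_or_gt k ((i : ℕ) + (j : ℕ)) with h | h
      · rw [Nat.descFactorial_eq_zero_iff_lt.mpr (by omega), Nat.cast_zero]
        refine Finset.prod_eq_zero
          (Finset.mem_range.mpr (show (i : ℕ) + (j : ℕ) - k < K by omega)) ?_
        have hc : (((i : ℕ) + (j : ℕ) - k : ℕ) : ℚ)
            = ((i : ℕ) : ℚ) + ((j : ℕ) : ℚ) - (k : ℚ) := by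
          push_cast [h]; ring
        rw [hc]; ring
      · have hc : ∀ m ∈ Finset.range K, ((k : ℚ) - (i : ℕ) - (j : ℕ) + m)
            = ((k - (i : ℕ) - (j : ℕ) + m : ℕ) : ℚ) := by
          intro m hm
          have h1 : (j : ℕ) ≤ k - (i : ℕ) := by omega
          have h2 : (i : ℕ) ≤ k := by omega
          push_cast [Nat.cast_sub h1, Nat.cast_sub h2]
          ring
        rw [Finset.prod_congr rfl hc, ← Nat.cast_prod]
        congr 1
        rw [prod_range_add_eq_ascFactorial, ← Nat.add_descFactorial_eq_ascFactorial']
        congr 1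
        omega
    rw [Matrix.smul_apply, Matrix.mul_apply, hsum, hprod,
      Nat.descFactorial_eq_factorial_mul_choose, smul_eq_mul]
    push_cast
    ring
  rw [hM, Matrix.det_smul, Matrix.det_mul]
  have hdetB : B.det = 1 := by
    rw [Matrix.det_of_lowerTriangular B ?ht]
    case ht =>
      intro a j hlt
      have : (a : ℕ) < (j : ℕ) := hlt
      simp only [hB, Matrix.of_apply]
      rw [Nat.choose_eq_zero_of_lt (by omega), Nat.cast_zero]
    · simp [hB, Nat.choose_self]
  have hdetA : A.det = (-1 : ℚ) ^ (k * (k - 1) / 2) := by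
    have h1 : (A.submatrix Fin.revPerm id).det = 1 := by
      rw [Matrix.det_of_lowerTriangular _ ?ht]
      case ht =>
        intro i a hlt
        have hlt' : (i : ℕ) < (a : ℕ) := hlt
        simp only [Matrix.submatrix_apply, id, hA, Matrix.of_apply, Fin.revPerm_apply]
        rw [Nat.choose_eq_zero_of_lt ?hx, Nat.cast_zero]
        case hx =>
          have := Fin.val_rev i
          omega
      · apply Finset.prod_eq_one
        intro i _
        simp only [Matrix.submatrix_apply, id, hA, Matrix.of_apply, Fin.revPerm_apply]
        have hv : k - 1 - (Fin.rev i : ℕ) = (i : ℕ) := by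
          have := Fin.val_rev i
          have := i.isLt
          omega
        rw [hv, Nat.choose_self, Nat.cast_one]
    have h2 := Matrix.det_permute Fin.revPerm A
    rw [h1, sign_revPerm_aux] at h2
    have hcast : ((((-1 : ℤˣ) ^ (k * (k - 1) / 2) : ℤˣ) : ℤ) : ℚ)
        = (-1 : ℚ) ^ (k * (k - 1) / 2) := by push_cast; ring
    rw [hcast] at h2
    have hsq : (-1 : ℚ) ^ (k * (k - 1) / 2) * (-1 : ℚ) ^ (k * (k - 1) / 2) = 1 := by
      rw [← pow_add, ← two_mul, pow_mul]
      norm_num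
    calc A.det = ((-1 : ℚ) ^ (k * (k - 1) / 2) * (-1 : ℚ) ^ (k * (k - 1) / 2)) * A.det := by
          rw [hsq, one_mul]
      _ = (-1 : ℚ) ^ (k * (k - 1) / 2) * ((-1 : ℚ) ^ (k * (k - 1) / 2) * A.det) := by ring
      _ = (-1 : ℚ) ^ (k * (k - 1) / 2) := by rw [← h2, mul_one]
  rw [hdetA, hdetB, mul_one]
  have hF : ((K.factorial : ℚ)) ^ k ≠ 0 :=
    pow_ne_zero _ (Nat.cast_ne_zero.mpr K.factorial_ne_zero)
  field_simp
  rw [Fintype.card_fin, ← pow_mul, mul_comm (k * (k - 1) / 2) 2, pow_mul]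
  norm_num
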